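/- Suppose f : ℝ^d → ℝ^d and g : ℝ^d → ℝ^{d×m} satisfy ⟨x, f(x)⟩ + ((p-1)/2)|g(x)|² ≤ K(1 + |x|²) for all x, with K > 0 and p > 2. Let h ≥ 1 and define f_h(x) = f(x) for |x| ≤ h, f_h(x) = (|x|/h) f(h x/|x|) for |x| > h, and similarly g_h. Then ⟨x, f_h(x)⟩ + ((p-1)/2)|g_h(x)|² ≤ 2K(1 + |x|²) for all x ∈ ℝ^d. -/

import Mathlib

theorem stmt_4 {d m : ℕ}
    (f : EuclideanSpace ℝ (Fin d) → EuclideanSpace ℝ (Fin d))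
    (g : EuclideanSpace ℝ (Fin d) → EuclideanSpace ℝ (Fin d × Fin m))
    (K p : ℝ) (hK : 0 < K) (hp : 2 < p)
    (hcond : ∀ x : EuclideanSpace ℝ (Fin d),
      (inner ℝ x (f x) : ℝ) + (p - 1) / 2 * ‖g x‖ ^ 2 ≤ K * (1 + ‖x‖ ^ 2))
    (h : ℝ) (hh : 1 ≤ h)
    (fh : EuclideanSpace ℝ (Fin d) → EuclideanSpace ℝ (Fin d))
    (gh : EuclideanSpace ℝ (Fin d) → EuclideanSpace ℝ (Fin d × Fin m))
    (hfh : ∀ x, fh x = if ‖x‖ ≤ h then f x else (‖x‖ / h) • f ((h / ‖x‖) • x))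
    (hgh : ∀ x, gh x = if ‖x‖ ≤ h then g x else (‖x‖ / h) • g ((h / ‖x‖) • x)) :
    ∀ x : EuclideanSpace ℝ (Fin d),
      (inner ℝ x (fh x) : ℝ) + (p - 1) / 2 * ‖gh x‖ ^ 2 ≤ 2 * K * (1 + ‖x‖ ^ 2) := by
  intro x
  rw [hfh, hgh]
  by_cases hx : ‖x‖ ≤ h
  · simp only [hx, if_pos]
    nlinarith [hcond x, sq_nonneg ‖x‖]
  · simp only [hx, if_false]
    push_neg at hx
    have h0 : (0:ℝ) < h := by linarith
    have hxpos : 0 < ‖x‖ := lt_trans h0 hx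
    set y := (h / ‖x‖) • x with hy
    have hny : ‖y‖ = h := by
      rw [hy, norm_smul, Real.norm_eq_abs, abs_of_pos (div_pos h0 hxpos),
        div_mul_cancel₀ _ hxpos.ne']
    have hin : (inner ℝ y (f y) : ℝ) = (h / ‖x‖) * inner ℝ x (f y) :=
      real_inner_smul_left _ _ _
    have hc := hcond y
    rw [hny, hin] at hc
    have key : (inner ℝ x ((‖x‖ / h) • f y) : ℝ) + (p - 1) / 2 * ‖(‖x‖ / h) • g y‖ ^ 2
        = (‖x‖ / h) ^ 2 * ((h / ‖x‖) * inner ℝ x (f y) + (p - 1) / 2 * ‖g y‖ ^ 2) := by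
      rw [real_inner_smul_right, norm_smul, Real.norm_eq_abs,
        abs_of_pos (div_pos hxpos h0)]
      field_simp
    rw [key]
    have h1 : (‖x‖ / h) ^ 2 * ((h / ‖x‖) * inner ℝ x (f y) + (p - 1) / 2 * ‖g y‖ ^ 2)
        ≤ (‖x‖ / h) ^ 2 * (K * (1 + h ^ 2)) :=
      mul_le_mul_of_nonneg_left hc (sq_nonneg _)
    refine h1.trans ?_
    have heq : (‖x‖ / h) ^ 2 * (K * (1 + h ^ 2)) = K * (‖x‖ ^ 2 / h ^ 2 + ‖x‖ ^ 2) := by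
      field_simp
    rw [heq]
    have hle : ‖x‖ ^ 2 / h ^ 2 ≤ ‖x‖ ^ 2 := by
      rw [div_le_iff₀ (by positivity)]
      nlinarith [mul_nonneg (sq_nonneg ‖x‖) (show (0:ℝ) ≤ h ^ 2 - 1 by nlinarith)]
    nlinarith
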